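/- Any set P ⊆ {0,1}^n of pairwise non-dominating solutions (with respect to the bi-objective function f = (f₁, f₂)) has cardinality at most 2^k. -/
import Mathlib


/-- Number of leading positions on which `x` agrees with the target string `z`. -/
def LO (ℓ : ℕ) (z x : Fin ℓ → Bool) : ℕ :=
  (Finset.univ.filter (fun i : Fin ℓ => ∀ j ≤ i, x j = z j)).card

/-- The all-ones target string `z¹ = 1^ℓ`. -/
def zOne (ℓ : ℕ) : Fin ℓ → Bool := fun _ => true

/-- The target string `z² = 1^{ℓ-r} 0^r`. -/
def zTwo (ℓ r : ℕ) : Fin ℓ → Bool := fun i => decide (i.val < ℓ - r)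

/-- The first base function `f₁^B(w) = (ℓ+1)·LO_{z¹}(w) + LO_{z²}(w)`. -/
def f1B (ℓ r : ℕ) (w : Fin ℓ → Bool) : ℕ :=
  (ℓ + 1) * LO ℓ (zOne ℓ) w + LO ℓ (zTwo ℓ r) w

/-- The second base function `f₂^B(w) = (ℓ+1)·LO_{z²}(w) + LO_{z¹}(w)`. -/
def f2B (ℓ r : ℕ) (w : Fin ℓ → Bool) : ℕ :=
  (ℓ + 1) * LO ℓ (zTwo ℓ r) w + LO ℓ (zOne ℓ) w

/-- The base functions indexed by `m : Fin 2` (`0` for `f₁^B`, `1` for `f₂^B`). -/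
def fB (ℓ r : ℕ) (m : Fin 2) : (Fin ℓ → Bool) → ℕ :=
  if m = 0 then f1B ℓ r else f2B ℓ r

/-- The `b`-th block (0-based) of a bitstring of length `n = k·ℓ`. -/
def blockOf (k ℓ : ℕ) (x : Fin (k * ℓ) → Bool) (b : Fin k) : Fin ℓ → Bool :=
  fun j => x ⟨b.val * ℓ + j.val, by
    calc b.val * ℓ + j.val < b.val * ℓ + ℓ := Nat.add_lt_add_left j.isLt _
      _ = (b.val + 1) * ℓ := by ring
      _ ≤ k * ℓ := Nat.mul_le_mul_right ℓ b.isLt⟩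

/-- The full objective `f_m(x) = Σ_b (ℓ+1)^{2(k-b)} f_m^B(x_{B_b})` (with 0-based
block index `b`, so the paper's exponent `2(k-b)` becomes `2(k-1-b)`). -/
def fObj (k ℓ r : ℕ) (m : Fin 2) (x : Fin (k * ℓ) → Bool) : ℕ :=
  ∑ b : Fin k, (ℓ + 1) ^ (2 * (k - 1 - b.val)) * fB ℓ r m (blockOf k ℓ x b)


lemma LO_lt_iff {ℓ : ℕ} (z x : Fin ℓ → Bool) (i : Fin ℓ) :
    i.val < LO ℓ z x ↔ ∀ j ≤ i, x j = z j := by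
  unfold LO
  constructor
  · intro h
    by_contra hc
    have hsub : (Finset.univ.filter (fun i : Fin ℓ => ∀ j ≤ i, x j = z j)) ⊆ Finset.Iio i := by
      intro a ha
      simp only [Finset.mem_filter, Finset.mem_univ, true_and] at ha
      simp only [Finset.mem_Iio]
      by_contra hlt
      push_neg at hlt
      exact hc (fun j hj => ha j (hj.trans hlt))
    have := Finset.card_le_card hsub
    rw [Fin.card_Iio] at this
    omega
  · intro h
    have hsub : Finset.Iic i ⊆ (Finset.univ.filter (fun i : Fin ℓ => ∀ j ≤ i, x j = z j)) := by
      intro a ha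
      simp only [Finset.mem_Iic] at ha
      simp only [Finset.mem_filter, Finset.mem_univ, true_and]
      exact fun j hj => h j (hj.trans ha)
    have := Finset.card_le_card hsub
    rw [Fin.card_Iic] at this
    omega

lemma LO_le {ℓ : ℕ} (z x : Fin ℓ → Bool) : LO ℓ z x ≤ ℓ := by
  unfold LO
  calc _ ≤ (Finset.univ : Finset (Fin ℓ)).card := Finset.card_le_card (Finset.filter_subset _ _)
    _ = ℓ := by simp

lemma LO_min_le {ℓ r : ℕ} (hℓ : 0 < ℓ) (hr1 : 1 ≤ r) (w : Fin ℓ → Bool) :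
    min (LO ℓ (zOne ℓ) w) (LO ℓ (zTwo ℓ r) w) ≤ ℓ - r := by
  by_contra hc
  push_neg at hc
  have hlt : ℓ - r < ℓ := Nat.sub_lt hℓ hr1
  set i : Fin ℓ := ⟨ℓ - r, hlt⟩
  have h1 : w i = zOne ℓ i := ((LO_lt_iff _ w i).1 (lt_of_lt_of_le hc (min_le_left _ _))) i le_rfl
  have h2 : w i = zTwo ℓ r i := ((LO_lt_iff _ w i).1 (lt_of_lt_of_le hc (min_le_right _ _))) i le_rfl
  simp [zOne, zTwo, i] at h1 h2
  rw [h1] at h2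
  simp at h2

lemma LO_ne_imp {ℓ r : ℕ} (hℓ : 0 < ℓ) (hr1 : 1 ≤ r) (w : Fin ℓ → Bool)
    (h : LO ℓ (zOne ℓ) w ≠ LO ℓ (zTwo ℓ r) w) :
    min (LO ℓ (zOne ℓ) w) (LO ℓ (zTwo ℓ r) w) = ℓ - r := by
  have hmin := LO_min_le hℓ hr1 w
  set a := LO ℓ (zOne ℓ) w with ha
  set b := LO ℓ (zTwo ℓ r) w with hb
  rcases lt_or_gt_of_ne h with hab | hab
  · -- a < b, show a = ℓ - r
    have haℓ : a < ℓ := lt_of_lt_of_le hab (LO_le _ _)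
    set i : Fin ℓ := ⟨a, haℓ⟩
    have hiv : (i : ℕ) = a := rfl
    have h2 : ∀ j ≤ i, w j = zTwo ℓ r j := (LO_lt_iff _ w i).1 hab
    have h1 : ¬ ∀ j ≤ i, w j = zOne ℓ j := by
      intro hc
      have := (LO_lt_iff (zOne ℓ) w i).2 hc
      omega
    have hwi : w i = false := by
      by_contra hwi
      apply h1
      intro j hj
      rcases eq_or_lt_of_le hj with rfl | hj'
      · simpa [zOne] using hwi
      · have : j.val < a := hj'
        exact ((LO_lt_iff (zOne ℓ) w j).1 this) j le_rfl
    have := h2 i le_rfl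
    rw [hwi] at this
    simp only [zTwo, i] at this
    have : ¬ (a < ℓ - r) := by
      intro hc
      simp [hc] at this
    omega
  · -- b < a, show b = ℓ - r
    have hbℓ : b < ℓ := lt_of_lt_of_le hab (LO_le _ _)
    set i : Fin ℓ := ⟨b, hbℓ⟩
    have hiv : (i : ℕ) = b := rfl
    have h1 : ∀ j ≤ i, w j = zOne ℓ j := (LO_lt_iff _ w i).1 hab
    have h2 : ¬ ∀ j ≤ i, w j = zTwo ℓ r j := by
      intro hc
      have := (LO_lt_iff (zTwo ℓ r) w i).2 hc
      omega
    have hwi : w i = true := by simpa [zOne] using h1 i le_rfl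
    have hzi : zTwo ℓ r i ≠ true := by
      intro hc
      apply h2
      intro j hj
      rcases eq_or_lt_of_le hj with rfl | hj'
      · rw [hwi, hc]
      · have : j.val < b := hj'
        exact ((LO_lt_iff (zTwo ℓ r) w j).1 this) j le_rfl
    simp only [zTwo, ne_eq, decide_eq_true_eq, hiv] at hzi
    omega

lemma LO_key {ℓ r : ℕ} (hℓ : 0 < ℓ) (hr1 : 1 ≤ r) (w : Fin ℓ → Bool)
    (h : LO ℓ (zTwo ℓ r) w ≤ LO ℓ (zOne ℓ) w) :
    LO ℓ (zTwo ℓ r) w = min (LO ℓ (zOne ℓ) w) (ℓ - r) := by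
  rcases eq_or_lt_of_le h with heq | hlt
  · have := LO_min_le hℓ hr1 w
    omega
  · have := LO_ne_imp hℓ hr1 w (by omega)
    omega

lemma LO_key' {ℓ r : ℕ} (hℓ : 0 < ℓ) (hr1 : 1 ≤ r) (w : Fin ℓ → Bool)
    (h : LO ℓ (zOne ℓ) w ≤ LO ℓ (zTwo ℓ r) w) :
    LO ℓ (zOne ℓ) w = min (LO ℓ (zTwo ℓ r) w) (ℓ - r) := by
  rcases eq_or_lt_of_le h with heq | hlt
  · have := LO_min_le hℓ hr1 w
    omega
  · have := LO_ne_imp hℓ hr1 w (by omega)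
    omega

def g1 (ℓ c : ℕ) (M : ℕ) : ℕ := (ℓ + 1) * M + min M c
def g2 (ℓ c : ℕ) (M : ℕ) : ℕ := (ℓ + 1) * min M c + M

lemma g1_strictMono (ℓ c : ℕ) : StrictMono (g1 ℓ c) := by
  intro M M' h
  have h2 : min M c ≤ min M' c := min_le_min h.le le_rfl
  have h1 : (ℓ + 1) * M < (ℓ + 1) * M' :=
    mul_lt_mul_of_pos_left h (by omega)
  unfold g1; omega

lemma g2_strictMono (ℓ c : ℕ) : StrictMono (g2 ℓ c) := by
  intro M M' h
  have h2 : min M c ≤ min M' c := min_le_min h.le le_rfl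
  have h1 : (ℓ + 1) * min M c ≤ (ℓ + 1) * min M' c := Nat.mul_le_mul_left _ h2
  unfold g2; omega

/-- per-block comonotonicity given equal signatures -/
lemma block_comono {ℓ r : ℕ} (hℓ : 0 < ℓ) (hr1 : 1 ≤ r) (w v : Fin ℓ → Bool)
    (hs : (LO ℓ (zTwo ℓ r) w ≤ LO ℓ (zOne ℓ) w) ↔ (LO ℓ (zTwo ℓ r) v ≤ LO ℓ (zOne ℓ) v)) :
    (f1B ℓ r w ≤ f1B ℓ r v ↔ f2B ℓ r w ≤ f2B ℓ r v) := by
  by_cases hc : LO ℓ (zTwo ℓ r) w ≤ LO ℓ (zOne ℓ) w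
  · have hcv := hs.1 hc
    have e1 : f1B ℓ r w = g1 ℓ (ℓ - r) (LO ℓ (zOne ℓ) w) := by
      unfold f1B g1; rw [LO_key hℓ hr1 w hc]
    have e2 : f1B ℓ r v = g1 ℓ (ℓ - r) (LO ℓ (zOne ℓ) v) := by
      unfold f1B g1; rw [LO_key hℓ hr1 v hcv]
    have e3 : f2B ℓ r w = g2 ℓ (ℓ - r) (LO ℓ (zOne ℓ) w) := by
      unfold f2B g2; rw [LO_key hℓ hr1 w hc]
    have e4 : f2B ℓ r v = g2 ℓ (ℓ - r) (LO ℓ (zOne ℓ) v) := by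
      unfold f2B g2; rw [LO_key hℓ hr1 v hcv]
    rw [e1, e2, e3, e4, (g1_strictMono ℓ (ℓ - r)).le_iff_le, (g2_strictMono ℓ (ℓ - r)).le_iff_le]
  · have hcv : ¬ LO ℓ (zTwo ℓ r) v ≤ LO ℓ (zOne ℓ) v := fun h => hc (hs.2 h)
    push_neg at hc hcv
    have e1 : f1B ℓ r w = g2 ℓ (ℓ - r) (LO ℓ (zTwo ℓ r) w) := by
      unfold f1B g2; rw [LO_key' hℓ hr1 w hc.le]
    have e2 : f1B ℓ r v = g2 ℓ (ℓ - r) (LO ℓ (zTwo ℓ r) v) := by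
      unfold f1B g2; rw [LO_key' hℓ hr1 v hcv.le]
    have e3 : f2B ℓ r w = g1 ℓ (ℓ - r) (LO ℓ (zTwo ℓ r) w) := by
      unfold f2B g1; rw [LO_key' hℓ hr1 w hc.le]
    have e4 : f2B ℓ r v = g1 ℓ (ℓ - r) (LO ℓ (zTwo ℓ r) v) := by
      unfold f2B g1; rw [LO_key' hℓ hr1 v hcv.le]
    rw [e1, e2, e3, e4, (g1_strictMono ℓ (ℓ - r)).le_iff_le, (g2_strictMono ℓ (ℓ - r)).le_iff_le]

/-- digit sum bound -/
lemma digit_sum_lt (B : ℕ) (hB : 0 < B) : ∀ (k : ℕ) (d : Fin k → ℕ), (∀ b, d b < B) →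
    (∑ b : Fin k, B ^ (k - 1 - b.val) * d b) < B ^ k := by
  intro k
  induction k with
  | zero => intro d _; simp
  | succ k ih =>
    intro d hd
    rw [Fin.sum_univ_succ]
    have h0 : (k + 1 - 1 - (0 : Fin (k+1)).val) = k := by simp
    have htail : ∀ b : Fin k, (k + 1 - 1 - (Fin.succ b).val) = k - 1 - b.val := by
      intro b; simp [Fin.val_succ]; omega
    have tl : (∑ b : Fin k, B ^ (k + 1 - 1 - (Fin.succ b).val) * d (Fin.succ b))
        = ∑ b : Fin k, B ^ (k - 1 - b.val) * d (Fin.succ b) := by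
      apply Finset.sum_congr rfl
      intro b _; rw [htail b]
    rw [h0, tl]
    have h1 : (∑ b : Fin k, B ^ (k - 1 - b.val) * d (Fin.succ b)) < B ^ k :=
      ih _ (fun b => hd _)
    have h2 : d 0 < B := hd 0
    have h3 : B ^ k * d 0 + B ^ k ≤ B ^ (k + 1) := by
      rw [pow_succ]
      have h4 : B ^ k * (d 0 + 1) ≤ B ^ k * B := Nat.mul_le_mul_left _ (by omega)
      rwa [Nat.mul_succ] at h4
    omega

lemma base_le (t a a' s s' : ℕ) (hs : s < t) (hs' : s' < t) :
    (t * a + s ≤ t * a' + s') ↔ (a < a' ∨ (a = a' ∧ s ≤ s')) := by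
  rcases lt_trichotomy a a' with h1 | h1 | h1
  · have key : t * a + t ≤ t * a' := by
      have h2 : t * (a + 1) ≤ t * a' := Nat.mul_le_mul_left _ h1
      rwa [Nat.mul_succ] at h2
    constructor
    · intro _; exact Or.inl h1
    · intro _; omega
  · subst h1
    constructor
    · intro h; exact Or.inr ⟨rfl, by omega⟩
    · rintro (h | ⟨_, h⟩) <;> omega
  · have key : t * a' + t ≤ t * a := by
      have h2 : t * (a' + 1) ≤ t * a := Nat.mul_le_mul_left _ h1
      rwa [Nat.mul_succ] at h2
    constructor
    · intro h; omega
    · rintro (h | ⟨h, _⟩) <;> omega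

/-- main digits comparison lemma -/
lemma digit_cmp (B : ℕ) (hB : 0 < B) : ∀ (k : ℕ) (d d' e e' : Fin k → ℕ),
    (∀ b, d b < B) → (∀ b, d' b < B) → (∀ b, e b < B) → (∀ b, e' b < B) →
    (∀ b, (d b ≤ d' b ↔ e b ≤ e' b) ∧ (d' b ≤ d b ↔ e' b ≤ e b)) →
    ((∑ b : Fin k, B ^ (k - 1 - b.val) * d b ≤ ∑ b : Fin k, B ^ (k - 1 - b.val) * d' b) ↔
     (∑ b : Fin k, B ^ (k - 1 - b.val) * e b ≤ ∑ b : Fin k, B ^ (k - 1 - b.val) * e' b)) := by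
  intro k
  induction k with
  | zero => intro d d' e e' _ _ _ _ _; simp
  | succ k ih =>
    intro d d' e e' hd hd' he he' H
    have reidx : ∀ (f : Fin (k+1) → ℕ),
        (∑ b : Fin (k+1), B ^ (k + 1 - 1 - b.val) * f b)
        = B ^ k * f 0 + ∑ b : Fin k, B ^ (k - 1 - b.val) * f (Fin.succ b) := by
      intro f
      rw [Fin.sum_univ_succ]
      have h0 : (k + 1 - 1 - ((0 : Fin (k+1))).val) = k := by simp
      rw [h0]
      congr 1
      apply Finset.sum_congr rfl
      intro b _
      have hbv : (k + 1 - 1 - (Fin.succ b).val) = k - 1 - b.val := by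
        have : (Fin.succ b).val = b.val + 1 := Fin.val_succ b
        omega
      rw [hbv]
    rw [reidx d, reidx d', reidx e, reidx e']
    have hsd : (∑ b : Fin k, B ^ (k - 1 - b.val) * d (Fin.succ b)) < B ^ k :=
      digit_sum_lt B hB k _ (fun b => hd _)
    have hsd' : (∑ b : Fin k, B ^ (k - 1 - b.val) * d' (Fin.succ b)) < B ^ k :=
      digit_sum_lt B hB k _ (fun b => hd' _)
    have hse : (∑ b : Fin k, B ^ (k - 1 - b.val) * e (Fin.succ b)) < B ^ k :=
      digit_sum_lt B hB k _ (fun b => he _)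
    have hse' : (∑ b : Fin k, B ^ (k - 1 - b.val) * e' (Fin.succ b)) < B ^ k :=
      digit_sum_lt B hB k _ (fun b => he' _)
    rw [base_le (B ^ k) _ _ _ _ hsd hsd', base_le (B ^ k) _ _ _ _ hse hse']
    have htail : ((∑ b : Fin k, B ^ (k - 1 - b.val) * d (Fin.succ b) ≤
          ∑ b : Fin k, B ^ (k - 1 - b.val) * d' (Fin.succ b)) ↔
        (∑ b : Fin k, B ^ (k - 1 - b.val) * e (Fin.succ b) ≤
          ∑ b : Fin k, B ^ (k - 1 - b.val) * e' (Fin.succ b))) :=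
      ih _ _ _ _ (fun b => hd _) (fun b => hd' _) (fun b => he _) (fun b => he' _)
        (fun b => H (Fin.succ b))
    have h0 := H 0
    have hlt : d 0 < d' 0 ↔ e 0 < e' 0 := by
      rw [Nat.lt_iff_le_not_le, Nat.lt_iff_le_not_le, h0.1, h0.2]
    have heq : d 0 = d' 0 ↔ e 0 = e' 0 := by
      constructor <;> intro hx
      · exact le_antisymm (h0.1.1 hx.le) (h0.2.1 hx.ge)
      · exact le_antisymm (h0.1.2 hx.le) (h0.2.2 hx.ge)
    rw [hlt, heq, htail]

section MainProof

variable {k ℓ r : ℕ}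

lemma fB_lt (ℓ r : ℕ) (m : Fin 2) (w : Fin ℓ → Bool) : fB ℓ r m w < (ℓ + 1) ^ 2 := by
  have h1 := LO_le (zOne ℓ) w
  have h2 := LO_le (zTwo ℓ r) w
  have hsq : (ℓ + 1) ^ 2 = (ℓ + 1) * ℓ + (ℓ + 1) := by ring
  fin_cases m
  · show f1B ℓ r w < (ℓ + 1) ^ 2
    unfold f1B
    have : (ℓ + 1) * LO ℓ (zOne ℓ) w ≤ (ℓ + 1) * ℓ := Nat.mul_le_mul_left _ h1
    omega
  · show f2B ℓ r w < (ℓ + 1) ^ 2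
    unfold f2B
    have : (ℓ + 1) * LO ℓ (zTwo ℓ r) w ≤ (ℓ + 1) * ℓ := Nat.mul_le_mul_left _ h2
    omega

lemma fObj_eq (k ℓ r : ℕ) (m : Fin 2) (x : Fin (k * ℓ) → Bool) :
    fObj k ℓ r m x
      = ∑ b : Fin k, ((ℓ + 1) ^ 2) ^ (k - 1 - b.val) * fB ℓ r m (blockOf k ℓ x b) := by
  unfold fObj
  apply Finset.sum_congr rfl
  intro b _
  rw [pow_mul]

end MainProof

/-- Any set of pairwise non-dominating solutions (with respect to
the bi-objective function `f = (f₁, f₂)`) has cardinality at most `2^k`. -/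
theorem stmt_9 (k ℓ r : ℕ) (hk : 0 < k) (hℓ : 0 < ℓ) (hr1 : 1 ≤ r) (hr : r ≤ ℓ)
    (P : Finset (Fin (k * ℓ) → Bool))
    (hP : ∀ x ∈ P, ∀ y ∈ P, x ≠ y →
      ¬(fObj k ℓ r 0 x ≥ fObj k ℓ r 0 y ∧ fObj k ℓ r 1 x ≥ fObj k ℓ r 1 y)) :
    P.card ≤ 2 ^ k := by
  classical
  set B : ℕ := (ℓ + 1) ^ 2 with hBdef
  have hB : 0 < B := by positivity
  set S : (Fin (k * ℓ) → Bool) → (Fin k → Bool) := fun x b =>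
    decide (LO ℓ (zTwo ℓ r) (blockOf k ℓ x b) ≤ LO ℓ (zOne ℓ) (blockOf k ℓ x b)) with hSdef
  have hinj : Set.InjOn S P := by
    intro x hx y hy hSxy
    by_contra hxy
    have hsig : ∀ b : Fin k,
        (LO ℓ (zTwo ℓ r) (blockOf k ℓ x b) ≤ LO ℓ (zOne ℓ) (blockOf k ℓ x b)) ↔
        (LO ℓ (zTwo ℓ r) (blockOf k ℓ y b) ≤ LO ℓ (zOne ℓ) (blockOf k ℓ y b)) := by
      intro b
      have := congrFun hSxy b
      simpa [hSdef] using this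
    have H : ∀ b : Fin k,
        ((f1B ℓ r (blockOf k ℓ x b) ≤ f1B ℓ r (blockOf k ℓ y b) ↔
          f2B ℓ r (blockOf k ℓ x b) ≤ f2B ℓ r (blockOf k ℓ y b)) ∧
         (f1B ℓ r (blockOf k ℓ y b) ≤ f1B ℓ r (blockOf k ℓ x b) ↔
          f2B ℓ r (blockOf k ℓ y b) ≤ f2B ℓ r (blockOf k ℓ x b))) := by
      intro b
      exact ⟨block_comono hℓ hr1 _ _ (hsig b), block_comono hℓ hr1 _ _ (hsig b).symm⟩
    have hcmp : (fObj k ℓ r 0 x ≤ fObj k ℓ r 0 y ↔ fObj k ℓ r 1 x ≤ fObj k ℓ r 1 y) := by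
      have h0x : fObj k ℓ r 0 x = ∑ b : Fin k, B ^ (k - 1 - b.val) * f1B ℓ r (blockOf k ℓ x b) :=
        fObj_eq k ℓ r 0 x
      have h0y : fObj k ℓ r 0 y = ∑ b : Fin k, B ^ (k - 1 - b.val) * f1B ℓ r (blockOf k ℓ y b) :=
        fObj_eq k ℓ r 0 y
      have h1x : fObj k ℓ r 1 x = ∑ b : Fin k, B ^ (k - 1 - b.val) * f2B ℓ r (blockOf k ℓ x b) :=
        fObj_eq k ℓ r 1 x
      have h1y : fObj k ℓ r 1 y = ∑ b : Fin k, B ^ (k - 1 - b.val) * f2B ℓ r (blockOf k ℓ y b) :=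
        fObj_eq k ℓ r 1 y
      rw [h0x, h0y, h1x, h1y]
      exact digit_cmp B hB k _ _ _ _
        (fun b => fB_lt ℓ r 0 (blockOf k ℓ x b)) (fun b => fB_lt ℓ r 0 (blockOf k ℓ y b))
        (fun b => fB_lt ℓ r 1 (blockOf k ℓ x b)) (fun b => fB_lt ℓ r 1 (blockOf k ℓ y b))
        H
    have hcmp' : (fObj k ℓ r 0 y ≤ fObj k ℓ r 0 x ↔ fObj k ℓ r 1 y ≤ fObj k ℓ r 1 x) := by
      have h0x : fObj k ℓ r 0 x = ∑ b : Fin k, B ^ (k - 1 - b.val) * f1B ℓ r (blockOf k ℓ x b) :=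
        fObj_eq k ℓ r 0 x
      have h0y : fObj k ℓ r 0 y = ∑ b : Fin k, B ^ (k - 1 - b.val) * f1B ℓ r (blockOf k ℓ y b) :=
        fObj_eq k ℓ r 0 y
      have h1x : fObj k ℓ r 1 x = ∑ b : Fin k, B ^ (k - 1 - b.val) * f2B ℓ r (blockOf k ℓ x b) :=
        fObj_eq k ℓ r 1 x
      have h1y : fObj k ℓ r 1 y = ∑ b : Fin k, B ^ (k - 1 - b.val) * f2B ℓ r (blockOf k ℓ y b) :=
        fObj_eq k ℓ r 1 y
      rw [h0x, h0y, h1x, h1y]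
      exact digit_cmp B hB k _ _ _ _
        (fun b => fB_lt ℓ r 0 (blockOf k ℓ y b)) (fun b => fB_lt ℓ r 0 (blockOf k ℓ x b))
        (fun b => fB_lt ℓ r 1 (blockOf k ℓ y b)) (fun b => fB_lt ℓ r 1 (blockOf k ℓ x b))
        (fun b => ⟨(H b).2, (H b).1⟩)
    rcases le_total (fObj k ℓ r 0 x) (fObj k ℓ r 0 y) with hle | hle
    · exact hP y hy x hx (fun h => hxy h.symm) ⟨hle, hcmp.1 hle⟩
    · exact hP x hx y hy hxy ⟨hle, hcmp'.1 hle⟩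
  calc P.card ≤ (Finset.univ : Finset (Fin k → Bool)).card :=
        Finset.card_le_card_of_injOn S (fun _ _ => Finset.mem_univ _) hinj
    _ = 2 ^ k := by simp
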